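/- Let b > 0, d > 1, ν ∈ ℕ₀, m ∈ ℤⁿ, ε > 0 and R > 0, and let E ⊂ d·Q_{ν,m} be a Lebesgue-measurable set with |E| ≥ ε·2^{−νn} (i.e. |E| ≥ ε·|Q_{ν,m}|). Then for every x ∈ Q_{ν,m} one has (η_{ν,R} ∗ χ_E)(x) = ∫_E 2^{nν}(1 + 2^ν|x − y|)^{−R} dy ≥ ε·(1 + (1+d)√n)^{−R}. In particular, χ_{Q_{ν,m}}(x) ≤ c·(η_{ν,R} ∗ χ_E)(x) for all x ∈ ℝⁿ, with the constant c = ε^{−1}(1 + (1+d)√n)^{R} independent of ν and m. -/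

import Mathlib

open MeasureTheory

noncomputable section

/-- The closed axis-parallel cube in `ℝⁿ` centered at `z` with side length `l`. -/
def cube (n : ℕ) (z : EuclideanSpace ℝ (Fin n)) (l : ℝ) : Set (EuclideanSpace ℝ (Fin n)) :=
  {y | ∀ i, |y i - z i| ≤ l / 2}

/-- The lattice point `2^{-ν} m ∈ ℝⁿ`. -/
def latticePt (n : ℕ) (ν : ℕ) (m : Fin n → ℤ) : EuclideanSpace ℝ (Fin n) :=
  WithLp.toLp 2 (fun i => (2 : ℝ) ^ (-(ν : ℤ)) * (m i : ℝ))

lemma norm_le_sqrt_mul {n : ℕ} (v : EuclideanSpace ℝ (Fin n)) (c : ℝ) (hc : 0 ≤ c)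
    (h : ∀ i, |v i| ≤ c) : ‖v‖ ≤ Real.sqrt n * c := by
  rw [EuclideanSpace.norm_eq]
  have hsum : ∑ i, ‖v i‖ ^ 2 ≤ (n : ℝ) * c ^ 2 := by
    calc ∑ i, ‖v i‖ ^ 2 ≤ ∑ _i : Fin n, c ^ 2 := by
          refine Finset.sum_le_sum fun i _ => ?_
          have := h i
          rw [Real.norm_eq_abs]
          nlinarith [abs_nonneg (v i)]
      _ = (n : ℝ) * c ^ 2 := by simp [Finset.sum_const]
  calc Real.sqrt (∑ i, ‖v i‖ ^ 2) ≤ Real.sqrt ((n : ℝ) * c ^ 2) := Real.sqrt_le_sqrt hsum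
    _ = Real.sqrt n * c := by
        rw [Real.sqrt_mul (by positivity), Real.sqrt_sq hc]

/-- If `E ⊆ d·Q_{ν,m}` is measurable with `|E| ≥ ε·2^{-νn}`, then for every `x ∈ Q_{ν,m}`
one has `(η_{ν,R} ∗ χ_E)(x) ≥ ε·(1+(1+d)√n)^{-R}`; in particular
`χ_{Q_{ν,m}} ≤ ε⁻¹(1+(1+d)√n)^{R} · (η_{ν,R} ∗ χ_E)` pointwise on `ℝⁿ`. -/
theorem stmt_2 (n : ℕ) (b d : ℝ) (hb : 0 < b) (hd : 1 < d) (ν : ℕ) (m : Fin n → ℤ)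
    (xc : EuclideanSpace ℝ (Fin n))
    (hxc : ‖xc - latticePt n ν m‖ ≤ b * (2 : ℝ) ^ (-(ν : ℤ)))
    (ε R : ℝ) (hε : 0 < ε) (hR : 0 < R)
    (E : Set (EuclideanSpace ℝ (Fin n))) (hEmeas : MeasurableSet E)
    (hEQ : E ⊆ cube n xc (d * (2 : ℝ) ^ (-(ν : ℤ))))
    (hvol : ENNReal.ofReal (ε * (2 : ℝ) ^ (-((ν : ℤ) * (n : ℤ)))) ≤ volume E) :
    (∀ x ∈ cube n xc ((2 : ℝ) ^ (-(ν : ℤ))),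
        ε * (1 + (1 + d) * Real.sqrt n) ^ (-R)
          ≤ ∫ y in E, (2 : ℝ) ^ (n * ν) * (1 + (2 : ℝ) ^ ν * ‖x - y‖) ^ (-R)) ∧
    (∀ x : EuclideanSpace ℝ (Fin n),
        (cube n xc ((2 : ℝ) ^ (-(ν : ℤ)))).indicator (fun _ => (1 : ℝ)) x
          ≤ ε⁻¹ * (1 + (1 + d) * Real.sqrt n) ^ R *
            ∫ y in E, (2 : ℝ) ^ (n * ν) * (1 + (2 : ℝ) ^ ν * ‖x - y‖) ^ (-R)) := by
  set l : ℝ := (2 : ℝ) ^ (-(ν : ℤ)) with hl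
  have hl0 : 0 < l := by positivity
  set K : ℝ := 1 + (1 + d) * Real.sqrt n with hKdef
  have hK1 : 1 ≤ K := by
    have h1 : (0 : ℝ) ≤ (1 + d) * Real.sqrt n := by positivity
    linarith
  have hK0 : 0 < K := lt_of_lt_of_le one_pos hK1
  have h2l : (2 : ℝ) ^ ν * l = 1 := by
    rw [hl, ← zpow_natCast (2 : ℝ) ν, ← zpow_add₀ (two_ne_zero)]
    simp
  -- E has finite measure
  have hEfin : volume E ≠ ⊤ := by
    have hsub : E ⊆ Metric.closedBall xc (Real.sqrt n * (d * l / 2)) := by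
      intro y hy
      rw [Metric.mem_closedBall, dist_eq_norm]
      exact norm_le_sqrt_mul _ _ (by positivity) fun i => (hEQ hy) i
    exact ne_top_of_le_ne_top (measure_closedBall_lt_top).ne (measure_mono hsub)
  have hVlb : ε * (2 : ℝ) ^ (-((ν : ℤ) * (n : ℤ))) ≤ (volume E).toReal := by
    have := ENNReal.toReal_mono hEfin hvol
    rwa [ENNReal.toReal_ofReal (by positivity)] at this
  have hpow1 : (2 : ℝ) ^ (n * ν) * (2 : ℝ) ^ (-((ν : ℤ) * (n : ℤ))) = 1 := by
    rw [← zpow_natCast (2 : ℝ) (n * ν), ← zpow_add₀ (two_ne_zero)]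
    have : ((n * ν : ℕ) : ℤ) + -((ν : ℤ) * (n : ℤ)) = 0 := by push_cast; ring
    rw [this, zpow_zero]
  have hKR : (0 : ℝ) < K ^ (-R) := Real.rpow_pos_of_pos hK0 _
  have hnonneg : ∀ (x : EuclideanSpace ℝ (Fin n)),
      0 ≤ ∫ y in E, (2 : ℝ) ^ (n * ν) * (1 + (2 : ℝ) ^ ν * ‖x - y‖) ^ (-R) := by
    intro x
    refine setIntegral_nonneg hEmeas fun y _ => ?_
    have : (0 : ℝ) ≤ (1 + (2 : ℝ) ^ ν * ‖x - y‖) ^ (-R) :=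
      Real.rpow_nonneg (by positivity) _
    positivity
  have main : ∀ x ∈ cube n xc l,
      ε * K ^ (-R) ≤ ∫ y in E, (2 : ℝ) ^ (n * ν) * (1 + (2 : ℝ) ^ ν * ‖x - y‖) ^ (-R) := by
    intro x hx
    have hbase : ∀ y ∈ E, 1 ≤ 1 + (2 : ℝ) ^ ν * ‖x - y‖ ∧ 1 + (2 : ℝ) ^ ν * ‖x - y‖ ≤ K := by
      intro y hy
      constructor
      · nlinarith [norm_nonneg (x - y), pow_pos (two_pos (α := ℝ)) ν]
      · have hxy : ‖x - y‖ ≤ Real.sqrt n * ((1 + d) * l / 2) := by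
          refine norm_le_sqrt_mul _ _ (by positivity) fun i => ?_
          have h1 : |x i - xc i| ≤ l / 2 := hx i
          have h2 : |y i - xc i| ≤ d * l / 2 := (hEQ hy) i
          have : |(x - y) i| = |(x i - xc i) - (y i - xc i)| := by
            congr 1
            simp
          rw [this]
          calc |(x i - xc i) - (y i - xc i)| ≤ |x i - xc i| + |y i - xc i| := abs_sub _ _
            _ ≤ (1 + d) * l / 2 := by linarith
        have h2ν : (0 : ℝ) < (2 : ℝ) ^ ν := by positivity
        have h3 : (2 : ℝ) ^ ν * ‖x - y‖ ≤ (2 : ℝ) ^ ν * (Real.sqrt n * ((1 + d) * l / 2)) :=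
          mul_le_mul_of_nonneg_left hxy h2ν.le
        have h4 : (2 : ℝ) ^ ν * (Real.sqrt n * ((1 + d) * l / 2))
            = Real.sqrt n * (1 + d) / 2 := by
          field_simp
          nlinarith [h2l]
        have hs : (0 : ℝ) ≤ Real.sqrt n := Real.sqrt_nonneg _
        rw [hKdef]
        nlinarith
    have hlow : ∀ y ∈ E, (2 : ℝ) ^ (n * ν) * K ^ (-R)
        ≤ (2 : ℝ) ^ (n * ν) * (1 + (2 : ℝ) ^ ν * ‖x - y‖) ^ (-R) := by
      intro y hy
      obtain ⟨h1, h2⟩ := hbase y hy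
      have := Real.rpow_le_rpow_of_nonpos (lt_of_lt_of_le one_pos h1) h2 (neg_nonpos.mpr hR.le)
      exact mul_le_mul_of_nonneg_left this (by positivity)
    have hint : IntegrableOn
        (fun y => (2 : ℝ) ^ (n * ν) * (1 + (2 : ℝ) ^ ν * ‖x - y‖) ^ (-R)) E volume := by
      refine Measure.integrableOn_of_bounded (M := (2:ℝ)^(n*ν)) hEfin ?_ ?_
      · have hc : Continuous fun y : EuclideanSpace ℝ (Fin n) =>
            (2 : ℝ) ^ (n * ν) * (1 + (2 : ℝ) ^ ν * ‖x - y‖) ^ (-R) := by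
          refine continuous_const.mul (Continuous.rpow_const ?_ fun y => Or.inl ?_)
          · exact continuous_const.add (continuous_const.mul ((continuous_const.sub continuous_id).norm))
          · positivity
        exact hc.aestronglyMeasurable
      · filter_upwards with y
        have h1 : (1 : ℝ) ≤ 1 + (2 : ℝ) ^ ν * ‖x - y‖ := by
          nlinarith [norm_nonneg (x - y), pow_pos (two_pos (α := ℝ)) ν]
        have h2 : (1 + (2 : ℝ) ^ ν * ‖x - y‖) ^ (-R) ≤ 1 :=
          Real.rpow_le_one_of_one_le_of_nonpos h1 (neg_nonpos.mpr hR.le)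
        have h3 : (0 : ℝ) ≤ (1 + (2 : ℝ) ^ ν * ‖x - y‖) ^ (-R) :=
          Real.rpow_nonneg (by positivity) _
        rw [Real.norm_eq_abs, abs_of_nonneg (by positivity)]
        nlinarith [pow_pos (two_pos (α := ℝ)) (n * ν)]
    have key := setIntegral_ge_of_const_le hEmeas hEfin hlow hint
    refine le_trans ?_ key
    have hV0 : 0 ≤ (volume E).toReal := ENNReal.toReal_nonneg
    have step : (2 : ℝ) ^ (n * ν) * K ^ (-R) * (ε * (2 : ℝ) ^ (-((ν : ℤ) * (n : ℤ))))
        ≤ (2 : ℝ) ^ (n * ν) * K ^ (-R) * (volume E).toReal :=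
      mul_le_mul_of_nonneg_left hVlb (by positivity)
    calc ε * K ^ (-R)
        = (2 : ℝ) ^ (n * ν) * K ^ (-R) * (ε * (2 : ℝ) ^ (-((ν : ℤ) * (n : ℤ)))) := by
          rw [show (2 : ℝ) ^ (n * ν) * K ^ (-R) * (ε * (2 : ℝ) ^ (-((ν : ℤ) * (n : ℤ))))
              = ε * K ^ (-R) * ((2 : ℝ) ^ (n * ν) * (2 : ℝ) ^ (-((ν : ℤ) * (n : ℤ)))) by ring,
            hpow1, mul_one]
      _ ≤ _ := step.trans_eq (by simp only [smul_eq_mul, Measure.real]; ring)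
  refine ⟨main, fun x => ?_⟩
  by_cases hx : x ∈ cube n xc l
  · rw [Set.indicator_of_mem hx]
    have h := main x hx
    have hKRK : K ^ R * K ^ (-R) = 1 := by
      rw [← Real.rpow_add hK0, add_neg_cancel, Real.rpow_zero]
    have h2 : ε⁻¹ * K ^ R * (ε * K ^ (-R))
        ≤ ε⁻¹ * K ^ R * ∫ y in E, (2 : ℝ) ^ (n * ν) * (1 + (2 : ℝ) ^ ν * ‖x - y‖) ^ (-R) :=
      mul_le_mul_of_nonneg_left h (by positivity)
    have h3 : ε⁻¹ * K ^ R * (ε * K ^ (-R)) = 1 := by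
      have hKRpos : (0 : ℝ) < K ^ R := Real.rpow_pos_of_pos hK0 _
      field_simp
      nlinarith [hKRK]
    linarith
  · rw [Set.indicator_of_notMem hx]
    have := hnonneg x
    have hKRpos : (0 : ℝ) < K ^ R := Real.rpow_pos_of_pos hK0 _
    positivity
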